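/- The number of primitive binary words of length n with an odd number of ones equals the sum over odd divisors d of n of μ(d)·2^{n/d - 1}, where μ is the Möbius function. -/

import Mathlib

/-- Number of ones in a binary word of length `n`. -/
def onesCount {n : ℕ} (w : Fin n → Fin 2) : ℕ :=
  (Finset.univ.filter (fun i => w i = 1)).card

/-- A word of length `n` is primitive if it is not a concatenation of `n/d ≥ 2`
copies of a word of some strictly shorter length `d`. -/
def PrimitiveWord {k n : ℕ} (w : Fin n → Fin k) : Prop :=
  ¬ ∃ d : ℕ, ∃ hd : 0 < d, ∃ hdn : d < n, d ∣ n ∧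
      ∀ i : Fin n, w i = w ⟨(i : ℕ) % d, Nat.lt_trans (Nat.mod_lt _ hd) hdn⟩

/-- `w` has period `d` (in the divisor sense). -/
def HP {n : ℕ} (w : Fin n → Fin 2) (d : ℕ) : Prop :=
  ∀ i : Fin n, w i = w ⟨(i : ℕ) % d, Nat.lt_of_le_of_lt (Nat.mod_le _ _) i.isLt⟩

instance {n d : ℕ} (w : Fin n → Fin 2) : Decidable (HP w d) := by
  unfold HP; infer_instance

lemma prim_iff {n : ℕ} (w : Fin n → Fin 2) :
    PrimitiveWord w ↔ ¬ ∃ d, 0 < d ∧ d < n ∧ d ∣ n ∧ HP w d := by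
  unfold PrimitiveWord HP
  constructor
  · rintro h ⟨d, h1, h2, h3, h4⟩; exact h ⟨d, h1, h2, h3, h4⟩
  · rintro h ⟨d, h1, h2, h3, h4⟩; exact h ⟨d, h1, h2, h3, h4⟩

instance {n : ℕ} (w : Fin n → Fin 2) : Decidable (PrimitiveWord w) :=
  decidable_of_iff (¬ ∃ d ∈ Finset.range n, 0 < d ∧ d ∣ n ∧ HP w d) (by
    rw [prim_iff]
    constructor
    · rintro h ⟨d, h1, h2, h3, h4⟩; exact h ⟨d, Finset.mem_range.mpr h2, h1, h3, h4⟩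
    · rintro h ⟨d, hd, h1, h3, h4⟩; exact h ⟨d, h1, Finset.mem_range.mp hd, h3, h4⟩)

lemma hp_self {n : ℕ} (w : Fin n → Fin 2) : HP w n := by
  intro i
  congr 1
  exact Fin.ext (Nat.mod_eq_of_lt i.isLt).symm

lemma exists_per {n : ℕ} (hn : 0 < n) (w : Fin n → Fin 2) :
    ∃ d, 0 < d ∧ d ∣ n ∧ HP w d := ⟨n, hn, dvd_rfl, hp_self w⟩

def per {n : ℕ} (hn : 0 < n) (w : Fin n → Fin 2) : ℕ := Nat.find (exists_per hn w)

lemma hp_shift {n d : ℕ} {w : Fin n → Fin 2} (hd : d ∣ n) (h : HP w d)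
    (i : Fin n) (t : ℕ) :
    w ⟨(i + t * d) % n, Nat.mod_lt _ i.pos⟩ = w i := by
  have h1 := h ⟨(i + t * d) % n, Nat.mod_lt _ i.pos⟩
  have h2 := h i
  rw [h1, h2]
  congr 1
  exact Fin.ext (by simp [Nat.mod_mod_of_dvd _ hd, Nat.add_mul_mod_self_right])

lemma hp_gcd {n p q : ℕ} {w : Fin n → Fin 2} (hp : p ∣ n) (hq : q ∣ n)
    (hwp : HP w p) (hwq : HP w q) : HP w (Nat.gcd p q) := by
  intro i
  have npos : 0 < n := i.pos
  set g := Nat.gcd p q with hg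
  set j : ℕ := (i : ℕ) % g with hj
  set k : ℕ := (i : ℕ) / g with hk
  have bez : (g : ℤ) = p * Nat.gcdA p q + q * Nat.gcdB p q := Nat.gcd_eq_gcd_ab p q
  set a : ℕ := ((k * Nat.gcdA p q) % n).toNat with ha
  set b : ℕ := ((k * Nat.gcdB p q) % n).toNat with hb
  have hnz : (n : ℤ) ≠ 0 := by exact_mod_cast npos.ne'
  have haz : (a : ℤ) ≡ k * Nat.gcdA p q [ZMOD n] := by
    rw [ha, Int.toNat_of_nonneg (Int.emod_nonneg _ hnz)]
    exact Int.emod_emod_of_dvd _ dvd_rfl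
  have hbz : (b : ℤ) ≡ k * Nat.gcdB p q [ZMOD n] := by
    rw [hb, Int.toNat_of_nonneg (Int.emod_nonneg _ hnz)]
    exact Int.emod_emod_of_dvd _ dvd_rfl
  have key : ((j + (a * p + b * q) : ℕ) : ℤ) ≡ ((i : ℕ) : ℤ) [ZMOD n] := by
    push_cast
    calc (j + (a * p + b * q) : ℤ)
        ≡ j + ((k * Nat.gcdA p q) * p + (k * Nat.gcdB p q) * q) [ZMOD n] :=
          Int.ModEq.add_left _ (Int.ModEq.add (haz.mul_right _) (hbz.mul_right _))
      _ = j + k * g := by rw [bez]; ring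
      _ = ((i : ℕ) : ℤ) := by
          have h : ((j + g * k : ℕ) : ℤ) = ((i : ℕ) : ℤ) := by
            exact_mod_cast congrArg (Nat.cast : ℕ → ℤ) (Nat.mod_add_div (i : ℕ) g)
          rw [← h]; push_cast; ring
  have keyN : (j + (a * p + b * q)) % n = (i : ℕ) := by
    have h2 : (j + (a * p + b * q)) % n = (i : ℕ) % n := Int.natCast_modEq_iff.mp key
    rw [h2, Nat.mod_eq_of_lt i.isLt]
  have hjlt : j < n := lt_of_le_of_lt (Nat.mod_le _ _) i.isLt
  have s1 : w ⟨(j + a * p) % n, Nat.mod_lt _ npos⟩ = w ⟨j, hjlt⟩ := by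
    have := hp_shift hp hwp ⟨j, hjlt⟩ a
    simpa [Nat.mul_comm] using this
  have s2 : w ⟨((j + a * p) % n + b * q) % n, Nat.mod_lt _ npos⟩
      = w ⟨(j + a * p) % n, Nat.mod_lt _ npos⟩ := by
    have := hp_shift hq hwq ⟨(j + a * p) % n, Nat.mod_lt _ npos⟩ b
    simpa [Nat.mul_comm] using this
  have e3 : ((j + a * p) % n + b * q) % n = (i : ℕ) := by
    rw [Nat.add_mod, Nat.mod_mod_of_dvd, ← Nat.add_mod]
    · rw [← Nat.add_assoc] at keyN; exact keyN
    · exact dvd_rfl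
  have : w i = w ⟨j, hjlt⟩ := by
    rw [← s1, ← s2]
    congr 1
    exact Fin.ext e3.symm
  exact this

section Per
variable {n : ℕ} (hn : 0 < n) (w : Fin n → Fin 2)

lemma per_pos : 0 < per hn w := (Nat.find_spec (exists_per hn w)).1
lemma per_dvd : per hn w ∣ n := (Nat.find_spec (exists_per hn w)).2.1
lemma hp_per : HP w (per hn w) := (Nat.find_spec (exists_per hn w)).2.2
lemma per_min {d : ℕ} (h1 : 0 < d) (h2 : d ∣ n) (h3 : HP w d) : per hn w ≤ d :=
  Nat.find_min' _ ⟨h1, h2, h3⟩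
lemma per_le : per hn w ≤ n := per_min hn w hn dvd_rfl (hp_self w)

end Per

/-- restriction of a word to a prefix of length `p`. -/
def restr {n : ℕ} (p : ℕ) (h : p ≤ n) (w : Fin n → Fin 2) : Fin p → Fin 2 :=
  fun j => w ⟨j, lt_of_lt_of_le j.isLt h⟩

/-- repetition of a word of length `p` to length `n`. -/
def rep {n p : ℕ} (hp : 0 < p) (u : Fin p → Fin 2) : Fin n → Fin 2 :=
  fun i => u ⟨(i : ℕ) % p, Nat.mod_lt _ hp⟩

lemma hp_rep {n p : ℕ} (hp : 0 < p) (u : Fin p → Fin 2) : HP (rep (n := n) hp u) p := by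
  intro i
  unfold rep
  congr 1
  exact Fin.ext (by simp [Nat.mod_mod_of_dvd])

lemma rep_restr {n p : ℕ} (hp : 0 < p) (hpn : p ≤ n) (w : Fin n → Fin 2) (hw : HP w p) :
    rep (n := n) hp (restr p hpn w) = w := by
  funext i
  unfold rep restr
  exact (hw i).symm

lemma restr_rep {n p : ℕ} (hp : 0 < p) (hpn : p ≤ n) (u : Fin p → Fin 2) :
    restr p hpn (rep (n := n) hp u) = u := by
  funext j
  simp only [rep, restr]
  congr 1
  exact Fin.ext (Nat.mod_eq_of_lt j.isLt)

/-- counting lemma -/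
lemma card_filter_mod {n p : ℕ} (hpn : p ∣ n) (hp : 0 < p)
    (Q : Fin p → Prop) [DecidablePred Q] :
    (Finset.univ.filter (fun i : Fin n => Q ⟨(i : ℕ) % p, Nat.mod_lt _ hp⟩)).card
      = (n / p) * (Finset.univ.filter Q).card := by
  classical
  have hmul : p * (n / p) = n := Nat.mul_div_cancel' hpn
  rw [show (n / p) * (Finset.univ.filter Q).card
      = ((Finset.univ : Finset (Fin (n / p))) ×ˢ (Finset.univ.filter Q)).card by
    rw [Finset.card_product, Finset.card_univ, Fintype.card_fin]]
  refine Finset.card_bij'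
    (fun i _ => (⟨(i : ℕ) / p, Nat.div_lt_div_of_lt_of_dvd hpn i.isLt⟩,
        ⟨(i : ℕ) % p, Nat.mod_lt _ hp⟩))
    (fun x _ => ⟨p * (x.1 : ℕ) + (x.2 : ℕ), by
      have h1 := x.1.isLt
      have h2 := x.2.isLt
      calc p * (x.1 : ℕ) + (x.2 : ℕ) < p * (x.1 : ℕ) + p := by omega
        _ = p * ((x.1 : ℕ) + 1) := by ring
        _ ≤ p * (n / p) := Nat.mul_le_mul_left _ h1
        _ = n := hmul⟩)
    ?hi ?hj ?left ?right
  case hi =>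
    intro i hi
    simp only [Finset.mem_product, Finset.mem_univ, true_and, Finset.mem_filter] at hi ⊢
    exact hi
  case hj =>
    intro x hx
    simp only [Finset.mem_product, Finset.mem_univ, true_and, Finset.mem_filter] at hx ⊢
    have he : (⟨(p * (x.1 : ℕ) + (x.2 : ℕ)) % p, Nat.mod_lt _ hp⟩ : Fin p) = x.2 :=
      Fin.ext (by simp [Nat.mul_add_mod, Nat.mod_eq_of_lt x.2.isLt])
    rw [he]
    exact hx
  case left =>
    intro i hi
    exact Fin.ext (by simp [Nat.div_add_mod])
  case right =>
    intro x hx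
    have h2 := x.2.isLt
    refine Prod.ext (Fin.ext ?_) (Fin.ext ?_)
    · simp [Nat.mul_add_div hp, Nat.div_eq_of_lt h2]
    · simp [Nat.mul_add_mod, Nat.mod_eq_of_lt h2]

lemma onesCount_hp {n p : ℕ} (hpn : p ∣ n) (hp : 0 < p) (hle : p ≤ n)
    (w : Fin n → Fin 2) (hw : HP w p) :
    onesCount w = (n / p) * onesCount (restr p hle w) := by
  classical
  unfold onesCount
  rw [← card_filter_mod hpn hp (fun j => restr p hle w j = 1)]
  congr 1
  apply Finset.filter_congr
  intro i _
  constructor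
  · intro h
    rw [← h]
    unfold restr
    exact (hw i).symm
  · intro h
    rw [← h]
    exact hw i

lemma restr_primitive {n p : ℕ} (w : Fin n → Fin 2) (hp0 : 0 < p) (hple : p ≤ n)
    (hpdvd : p ∣ n) (hw : HP w p)
    (hmin : ∀ d, 0 < d → d ∣ n → HP w d → p ≤ d) :
    PrimitiveWord (restr p hple w) := by
  rw [prim_iff]
  rintro ⟨q, hq0, hqp, hqper, hu⟩
  have hwq : HP w q := by
    intro i
    have h1 := hw i
    have e1 : (i : ℕ) % p < n := lt_of_le_of_lt (Nat.mod_le _ _) i.isLt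
    have e2 : ((i : ℕ) % p) % q < n := lt_of_le_of_lt (Nat.mod_le _ _) e1
    have h2 : w ⟨(i : ℕ) % p, e1⟩ = w ⟨((i : ℕ) % p) % q, e2⟩ :=
      hu ⟨(i : ℕ) % p, Nat.mod_lt _ hp0⟩
    rw [h1, h2]
    congr 1
    exact Fin.ext (Nat.mod_mod_of_dvd _ hqper)
  have := hmin q hq0 (hqper.trans hpdvd) hwq
  omega

lemma per_rep_eq {n p : ℕ} (hn : 0 < n) (hp : 0 < p) (hpn : p ∣ n)
    (u : Fin p → Fin 2) (hu : PrimitiveWord u) :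
    per hn (rep (n := n) hp u) = p := by
  set w := rep (n := n) hp u with hwdef
  have hple : p ≤ n := Nat.le_of_dvd hn hpn
  have hwp : HP w p := hp_rep hp u
  have hle : per hn w ≤ p := per_min hn w hp hpn hwp
  rcases lt_or_eq_of_le hle with hlt | he
  · exfalso
    set q := per hn w with hq
    have hq0 : 0 < q := per_pos hn w
    have hqn : q ∣ n := per_dvd hn w
    have hwq : HP w q := hp_per hn w
    set g := Nat.gcd q p with hg
    have hg0 : 0 < g := Nat.gcd_pos_of_pos_left _ hq0
    have hgp : g ∣ p := Nat.gcd_dvd_right _ _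
    have hglt : g < p := lt_of_le_of_lt (Nat.le_of_dvd hq0 (Nat.gcd_dvd_left _ _)) hlt
    have hwg : HP w g := hp_gcd hqn hpn hwq hwp
    -- then u has period g
    rw [prim_iff] at hu
    refine hu ⟨g, hg0, hglt, hgp, ?_⟩
    intro j
    have h1 : u j = w ⟨(j : ℕ), lt_of_lt_of_le j.isLt hple⟩ := by
      simp only [hwdef, rep]
      congr 1
      exact Fin.ext (Nat.mod_eq_of_lt j.isLt).symm
    have h2 := hwg ⟨(j : ℕ), lt_of_lt_of_le j.isLt hple⟩
    have h3 : w ⟨(j : ℕ) % g, lt_of_le_of_lt (Nat.mod_le _ _) (lt_of_lt_of_le j.isLt hple)⟩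
        = u ⟨(j : ℕ) % g, lt_of_le_of_lt (Nat.mod_le _ _) j.isLt⟩ := by
      simp only [hwdef, rep]
      congr 1
      exact Fin.ext (Nat.mod_eq_of_lt (lt_of_le_of_lt (Nat.mod_le _ _) j.isLt))
    rw [h1, h2, h3]
  · exact he

lemma onesCount_eq_sum {n : ℕ} (w : Fin n → Fin 2) :
    onesCount w = ∑ i, if w i = 1 then 1 else 0 := by
  unfold onesCount
  rw [Finset.card_filter]

lemma odd_flip {n : ℕ} (hn : 0 < n) (w : Fin n → Fin 2) :
    Odd (onesCount (Function.update w ⟨0, hn⟩ (1 - w ⟨0, hn⟩)))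
      ↔ ¬ Odd (onesCount w) := by
  classical
  set i0 : Fin n := ⟨0, hn⟩
  have key : ∀ x : Fin 2, ((if (1 - x) = 1 then 1 else 0) + (if x = 1 then 1 else 0) : ℕ) = 1 := by
    decide
  have h1 : onesCount (Function.update w i0 (1 - w i0)) + onesCount w
      = 1 + 2 * ∑ i ∈ Finset.univ.erase i0, (if w i = 1 then 1 else 0) := by
    rw [onesCount_eq_sum, onesCount_eq_sum,
      ← Finset.add_sum_erase _ _ (Finset.mem_univ i0),
      ← Finset.add_sum_erase _ _ (Finset.mem_univ i0)]
    have h2 : ∀ i ∈ Finset.univ.erase i0,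
        ((if Function.update w i0 (1 - w i0) i = 1 then 1 else 0) : ℕ)
          = if w i = 1 then 1 else 0 := by
      intro i hi
      rw [Function.update_of_ne (Finset.ne_of_mem_erase hi)]
    rw [Finset.sum_congr rfl h2, Function.update_self]
    have := key (w i0)
    omega
  rw [Nat.odd_iff, Nat.odd_iff]
  omega

lemma card_odd_words {n : ℕ} (hn : 0 < n) :
    (Finset.univ.filter (fun w : Fin n → Fin 2 => Odd (onesCount w))).card = 2 ^ (n - 1) := by
  classical
  set O := Finset.univ.filter (fun w : Fin n → Fin 2 => Odd (onesCount w)) with hO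
  set E := Finset.univ.filter (fun w : Fin n → Fin 2 => ¬ Odd (onesCount w)) with hE
  have flipflip : ∀ x : Fin 2, 1 - (1 - x) = x := by decide
  have hinv : ∀ w : Fin n → Fin 2,
      Function.update (Function.update w ⟨0, hn⟩ (1 - w ⟨0, hn⟩)) ⟨0, hn⟩
        (1 - Function.update w ⟨0, hn⟩ (1 - w ⟨0, hn⟩) ⟨0, hn⟩) = w := by
    intro w
    funext i
    by_cases h : i = ⟨0, hn⟩
    · subst h
      simp [Function.update_self, flipflip]
    · simp [Function.update_of_ne h]
  have hcard : O.card = E.card := by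
    apply Finset.card_nbij' (fun w => Function.update w ⟨0, hn⟩ (1 - w ⟨0, hn⟩))
      (fun w => Function.update w ⟨0, hn⟩ (1 - w ⟨0, hn⟩))
    · intro w hw
      simp only [hO, hE, Finset.mem_coe, Finset.mem_filter, Finset.mem_univ, true_and] at hw ⊢
      rw [odd_flip hn]
      exact fun h => h hw
    · intro w hw
      simp only [hO, hE, Finset.mem_coe, Finset.mem_filter, Finset.mem_univ, true_and] at hw ⊢
      exact (odd_flip hn w).mpr hw
    · intro w _; exact hinv w
    · intro w _; exact hinv w
  have htot : O.card + E.card = 2 ^ n := by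
    rw [hO, hE, Finset.card_filter_add_card_filter_not, Finset.card_univ]
    simp [Fintype.card_fun]
  have h2 : 2 ^ n = 2 * 2 ^ (n - 1) := by
    rw [← pow_succ']
    congr 1
    omega
  omega

lemma comb {n : ℕ} (hn : 0 < n) :
    ∑ p ∈ n.divisors.filter (fun p => Odd (n / p)),
      (Finset.univ.filter
        (fun u : Fin p → Fin 2 => PrimitiveWord u ∧ Odd (onesCount u))).card
      = 2 ^ (n - 1) := by
  classical
  rw [← card_odd_words hn]
  rw [Finset.card_eq_sum_card_fiberwise (f := fun w => per hn w)
    (t := n.divisors.filter (fun p => Odd (n / p)))]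
  · apply Finset.sum_congr rfl
    intro p hp
    simp only [Finset.mem_filter, Nat.mem_divisors] at hp
    obtain ⟨⟨hpdvd, hn0⟩, hodd⟩ := hp
    have hp0 : 0 < p := Nat.pos_of_dvd_of_pos hpdvd hn
    have hple : p ≤ n := Nat.le_of_dvd hn hpdvd
    apply Finset.card_nbij' (rep hp0) (restr p hple)
    · intro u hu
      simp only [Finset.mem_coe, Finset.mem_filter, Finset.mem_univ, true_and] at hu ⊢
      obtain ⟨hu1, hu2⟩ := hu
      have hper := per_rep_eq hn hp0 hpdvd u hu1
      refine ⟨?_, hper⟩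
      have hcnt := onesCount_hp hpdvd hp0 hple (rep hp0 u) (hp_rep hp0 u)
      rw [hcnt, restr_rep, Nat.odd_mul]
      exact ⟨hodd, hu2⟩
    · intro w hw
      simp only [Finset.mem_coe, Finset.mem_filter, Finset.mem_univ, true_and] at hw ⊢
      obtain ⟨hw1, hw2⟩ := hw
      have hwp : HP w p := hw2 ▸ hp_per hn w
      have hcnt := onesCount_hp hpdvd hp0 hple w hwp
      constructor
      · apply restr_primitive w hp0 hple hpdvd hwp
        intro d hd1 hd2 hd3
        exact hw2 ▸ per_min hn w hd1 hd2 hd3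
      · rw [hcnt, Nat.odd_mul] at hw1
        exact hw1.2
    · intro u _
      exact restr_rep hp0 hple u
    · intro w hw
      simp only [Finset.mem_coe, Finset.mem_filter, Finset.mem_univ, true_and] at hw
      exact rep_restr hp0 hple w (hw.2 ▸ hp_per hn w)
  · intro w hw
    simp only [Finset.mem_coe, Finset.mem_filter, Finset.mem_univ, true_and, Nat.mem_divisors] at hw ⊢
    refine ⟨⟨per_dvd hn w, hn.ne'⟩, ?_⟩
    have hcnt := onesCount_hp (per_dvd hn w) (per_pos hn w) (per_le hn w) w (hp_per hn w)
    rw [hcnt, Nat.odd_mul] at hw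
    exact hw.1

open ArithmeticFunction in
noncomputable def mOdd : ArithmeticFunction ℤ :=
  ⟨fun d => if Odd d then moebius d else 0, by simp [Nat.odd_iff]⟩

def zOdd : ArithmeticFunction ℤ :=
  ⟨fun d => if Odd d then 1 else 0, by simp [Nat.odd_iff]⟩

def T2 : ArithmeticFunction ℤ :=
  ⟨fun m => if m = 0 then 0 else 2 ^ (m - 1), by simp⟩

lemma empty_primOdd : IsEmpty {w : Fin 0 → Fin 2 // PrimitiveWord w ∧ Odd (onesCount w)} := by
  refine ⟨fun x => ?_⟩
  obtain ⟨w, _, ho⟩ := x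
  have : onesCount w = 0 := by
    unfold onesCount
    simp
  rw [this] at ho
  simp [Nat.odd_iff] at ho

noncomputable def fA : ArithmeticFunction ℤ :=
  ⟨fun p => (Nat.card {w : Fin p → Fin 2 // PrimitiveWord w ∧ Odd (onesCount w)} : ℤ), by
    have := empty_primOdd
    simp [Nat.card_of_isEmpty]⟩

lemma fA_apply (p : ℕ) :
    fA p = (Nat.card {w : Fin p → Fin 2 // PrimitiveWord w ∧ Odd (onesCount w)} : ℤ) := rfl

lemma odd_of_dvd {d m : ℕ} (h : d ∣ m) (hm : Odd m) : Odd d := by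
  rcases Nat.even_or_odd d with he | ho
  · obtain ⟨c, rfl⟩ := h
    rw [Nat.even_iff] at he
    rw [Nat.odd_iff] at hm
    rw [Nat.mul_mod, he] at hm
    simp at hm
  · exact ho

lemma sum_moebius (m : ℕ) :
    ∑ d ∈ m.divisors, (ArithmeticFunction.moebius d : ℤ) = if m = 1 then 1 else 0 := by
  have h := ArithmeticFunction.coe_mul_zeta_apply
    (f := (ArithmeticFunction.moebius : ArithmeticFunction ℤ)) (x := m)
  rw [ArithmeticFunction.moebius_mul_coe_zeta, ArithmeticFunction.one_apply] at h
  exact h.symm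

lemma mOdd_mul_zOdd : mOdd * zOdd = 1 := by
  ext m
  rcases eq_or_ne m 0 with rfl | hm
  · simp
  rw [ArithmeticFunction.mul_apply, Nat.sum_divisorsAntidiagonal (f := fun a b => mOdd a * zOdd b)]
  by_cases hodd : Odd m
  · have hall : ∀ d ∈ m.divisors, mOdd d * zOdd (m / d) = (ArithmeticFunction.moebius d : ℤ) := by
      intro d hd
      obtain ⟨hddvd, -⟩ := Nat.mem_divisors.mp hd
      have hd_odd : Odd d := odd_of_dvd hddvd hodd
      have hmd_odd : Odd (m / d) := odd_of_dvd (Nat.div_dvd_of_dvd hddvd) hodd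
      show (if Odd d then _ else _) * (if Odd (m / d) then _ else _) = _
      rw [if_pos hd_odd, if_pos hmd_odd, mul_one]
    rw [Finset.sum_congr rfl hall, sum_moebius, ArithmeticFunction.one_apply]
  · have hall : ∀ d ∈ m.divisors, mOdd d * zOdd (m / d) = 0 := by
      intro d hd
      obtain ⟨hddvd, -⟩ := Nat.mem_divisors.mp hd
      by_cases hd_odd : Odd d
      · have : ¬ Odd (m / d) := by
          intro hmd
          apply hodd
          have : d * (m / d) = m := Nat.mul_div_cancel' hddvd
          rw [← this]
          exact hd_odd.mul hmd
        show (if Odd d then _ else _) * (if Odd (m / d) then _ else _) = 0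
        rw [if_neg this, mul_zero]
      · show (if Odd d then _ else _) * (if Odd (m / d) then _ else _) = 0
        rw [if_neg hd_odd, zero_mul]
    rw [Finset.sum_congr rfl hall, Finset.sum_const_zero, ArithmeticFunction.one_apply,
      if_neg (by rintro rfl; exact hodd odd_one)]

lemma zOdd_mul_fA : zOdd * fA = T2 := by
  ext m
  rcases eq_or_ne m 0 with rfl | hm
  · simp
  have hmpos : 0 < m := Nat.pos_of_ne_zero hm
  rw [ArithmeticFunction.mul_apply,
    Nat.sum_divisorsAntidiagonal' (f := fun a b => zOdd a * fA b)]
  have step : ∀ p ∈ m.divisors, zOdd (m / p) * fA p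
      = if Odd (m / p) then fA p else 0 := by
    intro p hp
    show (if Odd (m / p) then _ else _) * fA p = _
    by_cases h : Odd (m / p) <;> simp [h]
  rw [Finset.sum_congr rfl step, ← Finset.sum_filter]
  have hcomb := comb hmpos
  have heq : ∑ p ∈ m.divisors.filter (fun p => Odd (m / p)), fA p
      = ((2 : ℕ) ^ (m - 1) : ℤ) := by
    calc ∑ p ∈ m.divisors.filter (fun p => Odd (m / p)), fA p
        = ∑ p ∈ m.divisors.filter (fun p => Odd (m / p)),
            (((Finset.univ.filter
              (fun u : Fin p → Fin 2 => PrimitiveWord u ∧ Odd (onesCount u))).card : ℕ) : ℤ) := by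
          apply Finset.sum_congr rfl
          intro p _
          rw [fA_apply, Nat.card_eq_fintype_card, Fintype.card_subtype]
      _ = ((∑ p ∈ m.divisors.filter (fun p => Odd (m / p)),
            (Finset.univ.filter
              (fun u : Fin p → Fin 2 => PrimitiveWord u ∧ Odd (onesCount u))).card : ℕ) : ℤ) := by
          rw [Nat.cast_sum]
      _ = ((2 : ℕ) ^ (m - 1) : ℤ) := by rw [hcomb]; push_cast; ring
  rw [heq]
  show _ = T2 m
  simp [T2, ArithmeticFunction.coe_mk, hm]


theorem stmt0 (n : ℕ) :
    (Nat.card {w : Fin n → Fin 2 // PrimitiveWord w ∧ Odd (onesCount w)} : ℤ) =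
      ∑ d ∈ n.divisors.filter (fun d => Odd d),
        (ArithmeticFunction.moebius d) * 2 ^ (n / d - 1) := by
  classical
  have hfa : fA = mOdd * T2 := by
    calc fA = 1 * fA := (one_mul _).symm
      _ = (mOdd * zOdd) * fA := by rw [mOdd_mul_zOdd]
      _ = mOdd * (zOdd * fA) := mul_assoc _ _ _
      _ = mOdd * T2 := by rw [zOdd_mul_fA]
  have hL : (Nat.card {w : Fin n → Fin 2 // PrimitiveWord w ∧ Odd (onesCount w)} : ℤ) = fA n :=
    (fA_apply n).symm
  rw [hL, hfa]
  rcases eq_or_ne n 0 with rfl | hn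
  · simp
  rw [ArithmeticFunction.mul_apply, Nat.sum_divisorsAntidiagonal (f := fun a b => mOdd a * T2 b)]
  rw [Finset.sum_filter]
  apply Finset.sum_congr rfl
  intro d hd
  obtain ⟨hddvd, -⟩ := Nat.mem_divisors.mp hd
  have hd0 : 0 < d := Nat.pos_of_dvd_of_pos hddvd (Nat.pos_of_ne_zero hn)
  have hnd0 : n / d ≠ 0 := by
    have := Nat.div_pos (Nat.le_of_dvd (Nat.pos_of_ne_zero hn) hddvd) hd0
    omega
  show (if Odd d then _ else _) * T2 (n / d) = _
  by_cases h : Odd d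
  · rw [if_pos h, if_pos h]
    show _ * (if n / d = 0 then _ else _) = _
    rw [if_neg hnd0]
  · rw [if_neg h, if_neg h, zero_mul]
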